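/- Let λ : A → B be a ring homomorphism of commutative rings such that for every prime ideal q of B, the induced map on localizations A_{λ⁻¹(q)} → B_q makes B_q a flat A_{λ⁻¹(q)}-module. Then B is a flat A-module. -/

import Mathlib

open TensorProduct LinearMap

/-- If `λ : A → B` is a homomorphism of commutative rings such that for every prime `q` of `B`
the induced map `A_{λ⁻¹(q)} → B_q` makes `B_q` a flat `A_{λ⁻¹(q)}`-module, then `B` is a flat
`A`-module. -/
theorem statement4 {A B : Type} [CommRing A] [CommRing B] [Algebra A B]
    (h : ∀ (q : Ideal B) [q.IsPrime],
      letI : Algebra (Localization.AtPrime (q.comap (algebraMap A B)))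
          (Localization.AtPrime q) :=
        (Localization.localRingHom (q.comap (algebraMap A B)) q (algebraMap A B) rfl).toAlgebra
      Module.Flat (Localization.AtPrime (q.comap (algebraMap A B))) (Localization.AtPrime q)) :
    Module.Flat A B := by
  rw [Module.Flat.iff_lTensor_injective']
  intro I
  let F : B ⊗[A] I →ₗ[B] B ⊗[A] A :=
    TensorProduct.AlgebraTensorModule.map (LinearMap.id (R := B) (M := B)) I.subtype
  have hcoe : ⇑(lTensor B I.subtype) = ⇑F := by
    have h1 : (F.restrictScalars A) = lTensor B I.subtype := TensorProduct.ext' fun b x => rfl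
    rw [← h1]; rfl
  rw [hcoe]
  apply injective_of_localized_maximal
  intro J hJ
  haveI : J.IsPrime := hJ.isPrime
  set S := J.primeCompl with hS
  set p : Ideal A := J.comap (algebraMap A B) with hp
  letI : Algebra (Localization.AtPrime p) (Localization.AtPrime J) :=
    (Localization.localRingHom p J (algebraMap A B) rfl).toAlgebra
  haveI : IsScalarTower A (Localization.AtPrime p) (Localization.AtPrime J) :=
    IsScalarTower.of_algebraMap_eq fun x => by
      rw [IsScalarTower.algebraMap_apply A B (Localization.AtPrime J)]
      exact (Localization.localRingHom_to_map p J (algebraMap A B) rfl x).symm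
  haveI hflatloc : Module.Flat (Localization.AtPrime p) (Localization.AtPrime J) := h J
  haveI : Module.Flat A (Localization.AtPrime J) := Module.Flat.trans A (Localization.AtPrime p) (Localization.AtPrime J)
  -- localization maps on the tensor products
  let gI : B ⊗[A] I →ₗ[B] (Localization.AtPrime J) ⊗[A] I :=
    TensorProduct.AlgebraTensorModule.map (Algebra.linearMap B (Localization.AtPrime J)) (LinearMap.id (R := A) (M := I))
  let gA : B ⊗[A] A →ₗ[B] (Localization.AtPrime J) ⊗[A] A :=
    TensorProduct.AlgebraTensorModule.map (Algebra.linearMap B (Localization.AtPrime J)) (LinearMap.id (R := A) (M := A))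
  have hbcI : IsBaseChange (Localization.AtPrime J) gI := by
    refine IsBaseChange.of_comp (TensorProduct.isBaseChange A (↥I) B) ?_
    have h1 : ((gI.restrictScalars A) ∘ₗ TensorProduct.mk A B (↥I) 1) =
        TensorProduct.mk A (Localization.AtPrime J) (↥I) 1 := by
      ext x; simp [gI]
    rw [show ((gI : B ⊗[A] I →ₗ[A] (Localization.AtPrime J) ⊗[A] I)) = gI.restrictScalars A from rfl, h1]
    exact TensorProduct.isBaseChange A (↥I) (Localization.AtPrime J)
  have hbcA : IsBaseChange (Localization.AtPrime J) gA := by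
    refine IsBaseChange.of_comp (TensorProduct.isBaseChange A A B) ?_
    have h1 : ((gA.restrictScalars A) ∘ₗ TensorProduct.mk A B A 1) =
        TensorProduct.mk A (Localization.AtPrime J) A 1 := by
      ext; simp [gA]
    rw [show ((gA : B ⊗[A] A →ₗ[A] (Localization.AtPrime J) ⊗[A] A)) = gA.restrictScalars A from rfl, h1]
    exact TensorProduct.isBaseChange A A (Localization.AtPrime J)
  haveI : IsLocalizedModule S gI := (isLocalizedModule_iff_isBaseChange S (Localization.AtPrime J) gI).mpr hbcI
  haveI : IsLocalizedModule S gA := (isLocalizedModule_iff_isBaseChange S (Localization.AtPrime J) gA).mpr hbcA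
  -- the localized map is (up to iso) lTensor (Localization.AtPrime J) I.subtype, which is injective by flatness
  let FJ : (Localization.AtPrime J) ⊗[A] I →ₗ[(Localization.AtPrime J)] (Localization.AtPrime J) ⊗[A] A :=
    TensorProduct.AlgebraTensorModule.map (LinearMap.id (R := (Localization.AtPrime J)) (M := (Localization.AtPrime J))) I.subtype
  have key : IsLocalizedModule.map S gI gA F = FJ.restrictScalars B := by
    apply IsLocalizedModule.ext S gI (IsLocalizedModule.map_units gA)
    rw [IsLocalizedModule.map_comp]
    apply LinearMap.restrictScalars_injective A
    apply TensorProduct.ext'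
    intro b x
    simp [F, gI, gA, FJ]
  have hFJinj : Function.Injective (IsLocalizedModule.map S gI gA F) := by
    rw [key]
    have h2 : Function.Injective (lTensor (Localization.AtPrime J) I.subtype) :=
      (Module.Flat.iff_lTensor_injective' (R := A) (M := Localization.AtPrime J)).mp inferInstance I
    have h3 : ⇑(FJ.restrictScalars B) = ⇑(lTensor (Localization.AtPrime J) I.subtype) := by
      have h4 : (FJ.restrictScalars A) = lTensor (Localization.AtPrime J) I.subtype := TensorProduct.ext' fun b x => by simp [FJ]
      rw [← h4]; rfl
    rw [show ⇑(FJ.restrictScalars B) = ⇑(lTensor (Localization.AtPrime J) I.subtype) from h3]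
    exact h2
  have hiso := IsLocalizedModule.map_iso_commute S gI gA F
  have hfun : ∀ z, (IsLocalizedModule.map S gI gA F) ((IsLocalizedModule.iso S gI) z) =
      (IsLocalizedModule.iso S gA)
        ((IsLocalizedModule.map S (LocalizedModule.mkLinearMap S (B ⊗[A] I))
          (LocalizedModule.mkLinearMap S (B ⊗[A] A)) F) z) :=
    fun z => LinearMap.congr_fun hiso z
  intro x y hxy
  apply (IsLocalizedModule.iso S gI).injective
  apply hFJinj
  rw [hfun, hfun]
  congr 1
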